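/- Let Φ, Ψ ∈ ℝ^{r_A×r} with σ₁(Φ) ≤ 1, σ₁(Ψ) ≤ 1, and let Σ be an r_A×r_A positive definite diagonal matrix with σ₁(Σ) = 1 and σ_{r_A}(Σ) = 1/κ. Write the eigendecomposition ΦΦᵀ = QΛQᵀ with Q orthogonal and 0 ⪯ Λ ⪯ I. Then Tr((I_{r_A} − ΦΦᵀ) Σ Ψ Ψᵀ Σ ΦΦᵀ) ≥ (σ_{r_A}(Ψ)²/κ²) · Tr((I_{r_A} − ΦΦᵀ)ΦΦᵀ). -/

import Mathlib

open Matrix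

/-- Spectral norm of a real matrix: square root of the largest eigenvalue of `Mᵀ M`. -/
noncomputable def specNorm {a b : ℕ} (M : Matrix (Fin a) (Fin b) ℝ) : ℝ :=
  Real.sqrt (sSup {e : ℝ | Module.End.HasEigenvalue (Matrix.toLin' (Mᵀ * M)) e})

lemma realCT {m n : ℕ} (M : Matrix (Fin m) (Fin n) ℝ) : Mᴴ = Mᵀ :=
  conjTranspose_eq_transpose_of_trivial M

lemma psd_diag_nonneg {n : ℕ} {A : Matrix (Fin n) (Fin n) ℝ} (hA : A.PosSemidef) (i : Fin n) :
    0 ≤ A i i := by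
  have := hA.dotProduct_mulVec_nonneg (Pi.single i 1)
  simpa [dotProduct, Pi.single_apply, mulVec, Finset.sum_ite_eq] using this

lemma psd_trace_nonneg {n : ℕ} {A : Matrix (Fin n) (Fin n) ℝ} (hA : A.PosSemidef) :
    0 ≤ A.trace :=
  Finset.sum_nonneg fun i _ => psd_diag_nonneg hA i

lemma psd_trace_mul_nonneg {n : ℕ} {A B : Matrix (Fin n) (Fin n) ℝ}
    (hA : A.PosSemidef) (hB : B.PosSemidef) : 0 ≤ (A * B).trace := by
  obtain ⟨Q, hQpsd, hQ⟩ : ∃ Q : Matrix (Fin n) (Fin n) ℝ, Q.PosSemidef ∧ Q * Q = A :=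
    by open scoped MatrixOrder in
      exact ⟨CFC.sqrt A, (CFC.sqrt_nonneg A).posSemidef, CFC.sqrt_mul_sqrt_self A hA.nonneg⟩
  have h1 : (A * B).trace = (Q * B * Q).trace := by
    rw [← hQ, mul_assoc, trace_mul_comm]
  rw [h1]
  have h2 := hB.mul_mul_conjTranspose_same Q
  rw [hQpsd.isHermitian.eq] at h2
  exact psd_trace_nonneg h2

lemma psd_smul {n : ℕ} {A : Matrix (Fin n) (Fin n) ℝ} (hA : A.PosSemidef) {c : ℝ} (hc : 0 ≤ c) :
    (c • A).PosSemidef := by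
  refine PosSemidef.of_dotProduct_mulVec_nonneg ?_ fun x => ?_
  · unfold Matrix.IsHermitian
    rw [conjTranspose_smul, hA.1.eq]
    simp
  · rw [smul_mulVec, dotProduct_smul]
    exact mul_nonneg hc (hA.dotProduct_mulVec_nonneg x)

lemma herm_sub_smul_psd {n : ℕ} {A : Matrix (Fin n) (Fin n) ℝ} (hA : A.IsHermitian)
    {c : ℝ} (h : ∀ i, c ≤ hA.eigenvalues i) : (A - c • 1).PosSemidef := by
  set U : Matrix (Fin n) (Fin n) ℝ := (hA.eigenvectorUnitary : Matrix (Fin n) (Fin n) ℝ) with hUdef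
  have hU : U * star U = 1 := mem_unitaryGroup_iff.mp hA.eigenvectorUnitary.2
  have h2 : (c • (1 : Matrix (Fin n) (Fin n) ℝ)) = U * (c • 1) * star U := by
    rw [Matrix.mul_smul, mul_one, Matrix.smul_mul, hU]
  have hco : (RCLike.ofReal ∘ hA.eigenvalues : Fin n → ℝ) = hA.eigenvalues := by
    funext i; simp
  have h1 : A = U * diagonal (RCLike.ofReal ∘ hA.eigenvalues) * star U := hA.spectral_theorem
  have hdiag : diagonal (fun i => hA.eigenvalues i - c)
      = diagonal (RCLike.ofReal ∘ hA.eigenvalues) - c • (1 : Matrix (Fin n) (Fin n) ℝ) := by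
    rw [smul_one_eq_diagonal, diagonal_sub, hco]
  have key : U * diagonal (fun i => hA.eigenvalues i - c) * star U = A - c • 1 := by
    rw [hdiag, mul_sub, sub_mul, ← h1, ← h2]
  rw [← key]
  have hd : (diagonal (fun i => hA.eigenvalues i - c)).PosSemidef :=
    PosSemidef.diagonal fun i => sub_nonneg.2 (h i)
  have := hd.mul_mul_conjTranspose_same U
  rwa [← star_eq_conjTranspose] at this

lemma herm_smul_sub_psd {n : ℕ} {A : Matrix (Fin n) (Fin n) ℝ} (hA : A.IsHermitian)
    {c : ℝ} (h : ∀ i, hA.eigenvalues i ≤ c) : (c • 1 - A).PosSemidef := by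
  set U : Matrix (Fin n) (Fin n) ℝ := (hA.eigenvectorUnitary : Matrix (Fin n) (Fin n) ℝ) with hUdef
  have hU : U * star U = 1 := mem_unitaryGroup_iff.mp hA.eigenvectorUnitary.2
  have h2 : (c • (1 : Matrix (Fin n) (Fin n) ℝ)) = U * (c • 1) * star U := by
    rw [Matrix.mul_smul, mul_one, Matrix.smul_mul, hU]
  have hco : (RCLike.ofReal ∘ hA.eigenvalues : Fin n → ℝ) = hA.eigenvalues := by
    funext i; simp
  have h1 : A = U * diagonal (RCLike.ofReal ∘ hA.eigenvalues) * star U := hA.spectral_theorem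
  have hdiag : diagonal (fun i => c - hA.eigenvalues i)
      = c • (1 : Matrix (Fin n) (Fin n) ℝ) - diagonal (RCLike.ofReal ∘ hA.eigenvalues) := by
    rw [smul_one_eq_diagonal, diagonal_sub, hco]
  have key : U * diagonal (fun i => c - hA.eigenvalues i) * star U = c • 1 - A := by
    rw [hdiag, mul_sub, sub_mul, ← h1, ← h2]
  rw [← key]
  have hd : (diagonal (fun i => c - hA.eigenvalues i)).PosSemidef :=
    PosSemidef.diagonal fun i => sub_nonneg.2 (h i)
  have := hd.mul_mul_conjTranspose_same U
  rwa [← star_eq_conjTranspose] at this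

lemma hasEigenvalue_toLin'_of_hermitian {n : ℕ} {A : Matrix (Fin n) (Fin n) ℝ}
    (hA : A.IsHermitian) (i : Fin n) :
    Module.End.HasEigenvalue (Matrix.toLin' A) (hA.eigenvalues i) := by
  apply Module.End.hasEigenvalue_of_hasEigenvector (x := ⇑(hA.eigenvectorBasis i))
  constructor
  · rw [Module.End.mem_eigenspace_iff, Matrix.toLin'_apply]
    exact hA.mulVec_eigenvectorBasis i
  · exact fun h => hA.eigenvectorBasis.orthonormal.ne_zero i (by simpa using h)

lemma eig_le_of_specNorm_le_one {a b : ℕ} {M : Matrix (Fin a) (Fin b) ℝ} (h : specNorm M ≤ 1)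
    {e : ℝ} (he : Module.End.HasEigenvalue (Matrix.toLin' (Mᵀ * M)) e) : e ≤ 1 := by
  set s := sSup {e : ℝ | Module.End.HasEigenvalue (Matrix.toLin' (Mᵀ * M)) e} with hs
  have hfin : Set.Finite {e : ℝ | Module.End.HasEigenvalue (Matrix.toLin' (Mᵀ * M)) e} :=
    Module.End.finite_hasEigenvalue _
  have he' : e ≤ s := le_csSup hfin.bddAbove he
  have hsq : Real.sqrt s ≤ 1 := h
  have hs1 : s ≤ 1 := by
    rcases le_or_gt s 1 with h1 | h1
    · exact h1
    · have h0 : (0 : ℝ) ≤ s := le_trans zero_le_one h1.le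
      calc s = Real.sqrt s * Real.sqrt s := (Real.mul_self_sqrt h0).symm
        _ ≤ 1 := mul_le_one₀ hsq (Real.sqrt_nonneg s) hsq
  linarith

theorem alignment_trace_lower_bound {r rA : ℕ} (κ : ℝ)
    (Φ Ψ : Matrix (Fin rA) (Fin r) ℝ)
    (hΦ : specNorm Φ ≤ 1) (hΨ : specNorm Ψ ≤ 1)
    (S : Matrix (Fin rA) (Fin rA) ℝ) (hSd : S.IsDiag) (hSpd : S.PosDef)
    (hs1 : specNorm S = 1)
    (hsmin : IsLeast (Set.range fun i => S i i) (1 / κ))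
    (hΨH : (Ψ * Ψᵀ).IsHermitian) :
    ((⨅ i, hΨH.eigenvalues i) / κ ^ 2) *
        (((1 : Matrix (Fin rA) (Fin rA) ℝ) - Φ * Φᵀ) * (Φ * Φᵀ)).trace ≤
      (((1 : Matrix (Fin rA) (Fin rA) ℝ) - Φ * Φᵀ) * S * Ψ * Ψᵀ * S * (Φ * Φᵀ)).trace := by
  classical
  -- Hermitian facts
  have hPh : (Φ * Φᵀ).IsHermitian := by
    have := isHermitian_mul_conjTranspose_self Φ
    rwa [realCT] at this
  have hGh : (Φᵀ * Φ).IsHermitian := by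
    have := isHermitian_conjTranspose_mul_self Φ
    rwa [realCT] at this
  -- (1) `1 - Φᵀ * Φ` is PSD, from the spectral-norm bound.
  have hGpsd : ((1 : ℝ) • (1 : Matrix (Fin r) (Fin r) ℝ) - Φᵀ * Φ).PosSemidef :=
    herm_smul_sub_psd hGh fun i =>
      eig_le_of_specNorm_le_one hΦ (hasEigenvalue_toLin'_of_hermitian hGh i)
  rw [one_smul] at hGpsd
  -- (2) `P * (1 - P)` is PSD where `P = Φ * Φᵀ`.
  have hX : ((Φ * Φᵀ) * (1 - Φ * Φᵀ)).PosSemidef := by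
    refine PosSemidef.of_dotProduct_mulVec_nonneg ?_ ?_
    · show ((Φ * Φᵀ) * (1 - Φ * Φᵀ))ᴴ = _
      rw [conjTranspose_mul, conjTranspose_sub, conjTranspose_one, hPh.eq, mul_sub, sub_mul,
        mul_one, one_mul]
    · intro x
      have hsx : star x = x := star_trivial x
      have hq := hGpsd.dotProduct_mulVec_nonneg (Φᵀ *ᵥ x)
      rw [star_trivial, sub_mulVec, one_mulVec, dotProduct_sub] at hq
      have e1 : x ⬝ᵥ ((Φ * Φᵀ) *ᵥ x) = (Φᵀ *ᵥ x) ⬝ᵥ (Φᵀ *ᵥ x) := by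
        rw [← mulVec_mulVec, dotProduct_mulVec, ← mulVec_transpose]
      have e2 : x ⬝ᵥ (((Φ * Φᵀ) * (Φ * Φᵀ)) *ᵥ x)
          = (Φᵀ *ᵥ x) ⬝ᵥ ((Φᵀ * Φ) *ᵥ (Φᵀ *ᵥ x)) := by
        rw [← mulVec_mulVec, dotProduct_mulVec]
        rw [show x ᵥ* (Φ * Φᵀ) = (Φ * Φᵀ)ᵀ *ᵥ x from (mulVec_transpose _ x).symm]
        rw [transpose_mul, transpose_transpose, ← mulVec_mulVec, ← mulVec_mulVec,
          dotProduct_mulVec, ← mulVec_transpose, mulVec_mulVec]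
        exact dotProduct_comm _ _
      rw [hsx, mul_sub, mul_one, sub_mulVec, dotProduct_sub, e1, e2, sub_nonneg]
      linarith
  -- (3) `Ψ * Ψᵀ ⪰ μ • 1`.
  have hΨpsd : (Ψ * Ψᵀ).PosSemidef := by
    have := posSemidef_self_mul_conjTranspose Ψ
    rwa [realCT] at this
  have hμ0 : 0 ≤ ⨅ i, hΨH.eigenvalues i :=
    Real.iInf_nonneg fun i => hΨpsd.eigenvalues_nonneg i
  have hA1 : (Ψ * Ψᵀ - (⨅ i, hΨH.eigenvalues i) • 1).PosSemidef :=
    herm_sub_smul_psd hΨH fun i => ciInf_le (Finite.bddBelow_range _) i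
  -- (4) `S * S ⪰ (1/κ²) • 1`.
  have hSdiag : diagonal S.diag = S := hSd.diagonal_diag
  have hdpos : ∀ i, 0 < S.diag i := by
    have hSpd' := hSpd
    rw [← hSdiag] at hSpd'
    exact posDef_diagonal_iff.mp hSpd'
  obtain ⟨i0, hi0⟩ := hsmin.1
  have hκpos : 0 < 1 / κ := hi0 ▸ hdpos i0
  have hdge : ∀ i, 1 / κ ≤ S.diag i := fun i => hsmin.2 ⟨i, rfl⟩
  have hSS : (S * S - (1 / κ ^ 2) • 1).PosSemidef := by
    rw [← hSdiag, diagonal_mul_diagonal, smul_one_eq_diagonal, diagonal_sub]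
    refine PosSemidef.diagonal fun i => sub_nonneg.2 ?_
    have h2 : 1 / κ ^ 2 = 1 / κ * (1 / κ) := by
      rw [div_mul_div_comm, one_mul, ← sq]
    rw [h2]
    exact mul_le_mul (hdge i) (hdge i) hκpos.le (le_trans hκpos.le (hdge i))
  -- (5) `S * (Ψ * Ψᵀ) * S ⪰ (μ/κ²) • 1`.
  have hMid : S * (Ψ * Ψᵀ) * S - ((⨅ i, hΨH.eigenvalues i) / κ ^ 2) • 1
      = S * (Ψ * Ψᵀ - (⨅ i, hΨH.eigenvalues i) • 1) * S
        + (⨅ i, hΨH.eigenvalues i) • (S * S - (1 / κ ^ 2) • 1) := by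
    rw [mul_sub, sub_mul, Matrix.mul_smul, Matrix.smul_mul, mul_one, smul_sub, smul_smul,
      mul_one_div]
    abel
  have hM : (S * (Ψ * Ψᵀ) * S - ((⨅ i, hΨH.eigenvalues i) / κ ^ 2) • 1).PosSemidef := by
    rw [hMid]
    have t1 := hA1.mul_mul_conjTranspose_same S
    rw [hSpd.isHermitian.eq] at t1
    exact t1.add (psd_smul hSS hμ0)
  -- (6) conclude via the trace inequality
  have key := psd_trace_mul_nonneg hM hX
  rw [sub_mul, trace_sub, Matrix.smul_mul, one_mul, trace_smul, sub_nonneg, smul_eq_mul] at key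
  have tX : ((Φ * Φᵀ) * (1 - Φ * Φᵀ)).trace
      = ((1 - Φ * Φᵀ) * (Φ * Φᵀ)).trace := trace_mul_comm _ _
  have tM : (S * (Ψ * Ψᵀ) * S * ((Φ * Φᵀ) * (1 - Φ * Φᵀ))).trace
      = ((1 - Φ * Φᵀ) * S * Ψ * Ψᵀ * S * (Φ * Φᵀ)).trace := by
    rw [trace_mul_comm]
    rw [show (Φ * Φᵀ) * (1 - Φ * Φᵀ) * (S * (Ψ * Ψᵀ) * S)
        = (Φ * Φᵀ) * ((1 - Φ * Φᵀ) * S * Ψ * Ψᵀ * S) by simp only [Matrix.mul_assoc]]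
    exact trace_mul_comm _ _
  rw [tX, tM] at key
  exact key
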